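/- Let F_q be a finite field of odd characteristic p, let k be an odd integer with 1 < k ≤ q-1 and k | q-1, and let a_1,...,a_k be the k-th roots of unity in F_q. Suppose D_k = [(a_i + a_j)^{(q-3)/2}]_{1≤i,j≤k} is non-singular. Then det D_k, which lies in F_p, satisfies: det D_k is a square in F_p if and only if s_k is a nonzero square in F_p, where s_k = k · ∑_{r=1}^{(q-1)/(2k)} binom((q-3)/2, ((2r-1)k - 1)/2) taken mod p. -/

import Mathlib

open Finset Polynomial

section AuxLemmas

private lemma aux_pow_mod {F : Type*} [Monoid F] {a : F} {k : ℕ} (h : a ^ k = 1) (m : ℕ) :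
    a ^ m = a ^ (m % k) := by
  conv_lhs => rw [← Nat.div_add_mod m k, pow_add, pow_mul, h, one_pow, one_mul]

private lemma aux_mod_sub {k n m : ℕ} (hk : 0 < k) (hn : n % k = k - 1) (hm : m ≤ n) :
    (n - m) % k = k - 1 - m % k := by
  have hA : m / k ≤ n / k := Nat.div_le_div_right hm
  obtain ⟨u, hu⟩ := Nat.exists_eq_add_of_le hA
  have h1 := Nat.div_add_mod n k
  have h2 := Nat.div_add_mod m k
  have h3 : m % k < k := Nat.mod_lt _ hk
  have h4 : k * (n / k) = k * (m / k) + k * u := by rw [hu, Nat.mul_add]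
  have hsub : n - m = k * u + (k - 1 - m % k) := by omega
  rw [hsub, Nat.mul_add_mod]
  exact Nat.mod_eq_of_lt (by omega)

variable {F : Type*} [Field F] {k : ℕ} {a : Fin k → F}

private lemma aux_nodal (hk : 0 < k) (ha : Function.Injective a) (hroot : ∀ i, a i ^ k = 1) :
    Lagrange.nodal Finset.univ a = X ^ k - 1 := by
  have h : degree (1 : F[X]) < degree ((X : F[X]) ^ k) := by simp [hk]
  refine (Polynomial.eq_of_degree_le_of_eval_index_eq (univ : Finset (Fin k))
    (v := a) (Set.injOn_of_injective ha) ?_ ?_ ?_ ?_).symm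
  · rw [degree_sub_eq_left_of_degree_lt h, degree_pow, degree_X, card_univ, Fintype.card_fin,
      nsmul_eq_mul, mul_one]
  · rw [degree_sub_eq_left_of_degree_lt h, Lagrange.degree_nodal, card_univ, Fintype.card_fin,
      degree_pow, degree_X, nsmul_eq_mul, mul_one]
  · rw [Lagrange.nodal_monic, leadingCoeff_sub_of_degree_lt h, monic_X_pow]
  · intro i _
    rw [Lagrange.eval_nodal_at_node (mem_univ i)]
    simp [hroot i]

private lemma aux_prod_a (hk : Odd k) (ha : Function.Injective a) (hroot : ∀ i, a i ^ k = 1) :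
    ∏ i, a i = 1 := by
  have h := aux_nodal hk.pos ha hroot
  have := congrArg (eval 0) h
  rw [Lagrange.eval_nodal] at this
  simp only [zero_sub, eval_sub, eval_pow, eval_X, eval_one, zero_pow hk.pos.ne'] at this
  have h2 : ∏ x : Fin k, -a x = (-1 : F) ^ k * ∏ x, a x :=
    calc ∏ x : Fin k, -a x = ∏ x : Fin k, (-1 : F) * a x :=
          Finset.prod_congr rfl (fun x _ => (neg_one_mul _).symm)
      _ = (∏ _x : Fin k, (-1 : F)) * ∏ x, a x := Finset.prod_mul_distrib
      _ = (-1 : F) ^ k * ∏ x, a x := by simp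
  rw [h2, hk.neg_one_pow, neg_one_mul] at this
  exact neg_inj.mp (by rw [this])

private lemma aux_erase_prod (hk : 0 < k) (ha : Function.Injective a) (hroot : ∀ i, a i ^ k = 1)
    (i : Fin k) : ∏ j ∈ univ.erase i, (a i - a j) = (k : F) * a i ^ (k - 1) := by
  have h := aux_nodal hk ha hroot
  have h2 := Lagrange.eval_nodal_derivative_eval_node_eq (s := (univ : Finset (Fin k)))
    (v := a) (i := i) (mem_univ i)
  rw [Lagrange.eval_nodal, h] at h2
  rw [← h2]
  have : derivative ((X : F[X]) ^ k - 1) = C (k : F) * X ^ (k - 1) := by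
    rw [derivative_sub, derivative_one, derivative_X_pow, sub_zero]
  rw [this]
  simp


private lemma aux_detVW (hk : Odd k) (ha : Function.Injective a) (hroot : ∀ i, a i ^ k = 1)
    (hprod : ∏ i, a i = 1)
    (herase : ∀ i : Fin k, ∏ j ∈ univ.erase i, (a i - a j) = (k : F) * a i ^ (k - 1)) :
    (Matrix.vandermonde a).det * (Matrix.of fun j t : Fin k => a j ^ (k - 1 - (t : ℕ))).det
      = (k : F) ^ k := by
  have ha0 : ∀ i, a i ≠ 0 := by
    intro i h
    have := hroot i
    rw [h, zero_pow hk.pos.ne'] at this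
    exact zero_ne_one this
  -- W as product of diagonal and vandermonde of inverses
  have hW : (Matrix.of fun j t : Fin k => a j ^ (k - 1 - (t : ℕ)))
      = Matrix.diagonal (fun j => a j ^ (k - 1)) * Matrix.vandermonde (fun j => (a j)⁻¹) := by
    ext j t
    rw [Matrix.diagonal_mul]
    show a j ^ (k - 1 - (t : ℕ)) = a j ^ (k - 1) * Matrix.vandermonde (fun j => (a j)⁻¹) j t
    rw [Matrix.vandermonde_apply, inv_pow]
    exact pow_sub₀ (a j) (ha0 j) (by have := t.isLt; omega)
  have hdetW : (Matrix.of fun j t : Fin k => a j ^ (k - 1 - (t : ℕ))).det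
      = ∏ i : Fin k, ∏ j ∈ Ioi i, ((a j)⁻¹ - (a i)⁻¹) := by
    rw [hW, Matrix.det_mul, Matrix.det_diagonal, Matrix.det_vandermonde, Finset.prod_pow, hprod,
      one_pow, one_mul]
  rw [hdetW, Matrix.det_vandermonde]
  rw [← Finset.prod_mul_distrib]
  have hpt : ∀ i : Fin k, (∏ j ∈ Ioi i, (a j - a i)) * ∏ j ∈ Ioi i, ((a j)⁻¹ - (a i)⁻¹)
      = ∏ j ∈ Ioi i, (((a j - a i) * (a i - a j)) * (a i * a j)⁻¹) := by
    intro i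
    rw [← Finset.prod_mul_distrib]
    refine Finset.prod_congr rfl fun j _ => ?_
    have hx : (a j)⁻¹ - (a i)⁻¹ = (a i - a j) * (a i * a j)⁻¹ := by
      field_simp
      rw [div_sub_div _ _ (ha0 j) (ha0 i), mul_comm (a j) (a i), one_mul, mul_one]
    rw [hx]
    ring
  rw [Finset.prod_congr rfl fun i _ => hpt i]
  have split : ∏ i : Fin k, ∏ j ∈ Ioi i, (((a j - a i) * (a i - a j)) * (a i * a j)⁻¹)
      = (∏ i : Fin k, ∏ j ∈ Ioi i, ((a j - a i) * (a i - a j)))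
        * (∏ i : Fin k, ∏ j ∈ Ioi i, (a i * a j))⁻¹ := by
    rw [← Finset.prod_inv_distrib, ← Finset.prod_mul_distrib]
    refine Finset.prod_congr rfl fun i _ => ?_
    rw [← Finset.prod_inv_distrib, ← Finset.prod_mul_distrib]
  rw [split]
  -- ∏_{i<j} a i * a j = 1
  have hIoiIio : (∏ i : Fin k, ∏ j ∈ Ioi i, a j) = ∏ j : Fin k, a j ^ (j : ℕ) := by
    rw [Finset.prod_comm' (s' := fun j => Iio j) (t' := univ) (by simp)]
    refine Finset.prod_congr rfl fun j _ => ?_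
    rw [Finset.prod_const, Fin.card_Iio]
  have hprodpairs : (∏ i : Fin k, ∏ j ∈ Ioi i, (a i * a j)) = 1 := by
    rw [Finset.prod_congr rfl fun i (_ : i ∈ univ) => Finset.prod_mul_distrib]
    rw [Finset.prod_mul_distrib, hIoiIio]
    rw [Finset.prod_congr rfl fun i (_ : i ∈ univ) =>
      (by rw [Finset.prod_const, Fin.card_Ioi] : ∏ _j ∈ Ioi i, a i = a i ^ (k - 1 - (i : ℕ)))]
    rw [← Finset.prod_mul_distrib]
    have : ∀ i : Fin k, a i ^ (k - 1 - (i : ℕ)) * a i ^ (i : ℕ) = a i ^ (k - 1) := by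
      intro i
      rw [← pow_add]
      congr 1
      have := i.isLt
      omega
    rw [Finset.prod_congr rfl fun i _ => this i, Finset.prod_pow, hprod, one_pow]
  rw [hprodpairs, inv_one, mul_one]
  -- ∏_{i<j} (a j - a i)(a i - a j) = ∏ i, ∏_{j ≠ i} (a i - a j) = k^k
  have herase2 : ∀ i : Fin k, univ.erase i = Iio i ∪ Ioi i := by
    intro i
    ext j
    simp only [Finset.mem_erase, Finset.mem_univ, and_true, Finset.mem_union, Finset.mem_Iio,
      Finset.mem_Ioi]
    exact ⟨fun h => h.lt_or_gt, fun h => h.elim ne_of_lt ne_of_gt⟩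
  have key : (∏ i : Fin k, ∏ j ∈ Ioi i, ((a j - a i) * (a i - a j)))
      = ∏ i : Fin k, ∏ j ∈ univ.erase i, (a i - a j) := by
    have swap : (∏ i : Fin k, ∏ j ∈ Iio i, (a i - a j))
        = ∏ i : Fin k, ∏ j ∈ Ioi i, (a j - a i) := by
      rw [Finset.prod_comm' (s' := fun j => Ioi j) (t' := univ) (by simp)]
    calc (∏ i : Fin k, ∏ j ∈ Ioi i, ((a j - a i) * (a i - a j)))
        = (∏ i : Fin k, ∏ j ∈ Ioi i, (a j - a i)) * ∏ i : Fin k, ∏ j ∈ Ioi i, (a i - a j) := by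
          rw [← Finset.prod_mul_distrib]
          exact Finset.prod_congr rfl fun i _ => Finset.prod_mul_distrib
      _ = (∏ i : Fin k, ∏ j ∈ Iio i, (a i - a j)) * ∏ i : Fin k, ∏ j ∈ Ioi i, (a i - a j) := by
          rw [swap]
      _ = ∏ i : Fin k, ∏ j ∈ univ.erase i, (a i - a j) := by
          rw [← Finset.prod_mul_distrib]
          refine Finset.prod_congr rfl fun i _ => ?_
          rw [herase2 i, Finset.prod_union (Finset.disjoint_left.mpr
            fun x hx hx' => absurd (Finset.mem_Iio.mp hx)
              (not_lt.mpr (le_of_lt (Finset.mem_Ioi.mp hx'))))]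
  rw [key, Finset.prod_congr rfl fun i _ => herase i, Finset.prod_mul_distrib, Finset.prod_const,
    Finset.card_univ, Fintype.card_fin, Finset.prod_pow, hprod, one_pow, mul_one]

end AuxLemmas

theorem stmt_14 (F : Type*) [Field F] [Fintype F] (q p k : ℕ)
    (hq : Fintype.card F = q) [Fact p.Prime] [CharP F p] (hp2 : p ≠ 2)
    (hkodd : Odd k) (hk1 : 1 < k) (hk2 : k ≤ q - 1) (hdvd : k ∣ q - 1)
    (a : Fin k → F) (ha : Function.Injective a) (hroot : ∀ i, a i ^ k = 1)
    (hns : Matrix.det (Matrix.of fun i j : Fin k => (a i + a j) ^ ((q - 3) / 2)) ≠ 0) :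
    ∃ d : ZMod p,
      ZMod.castHom (dvd_refl p) F d
        = Matrix.det (Matrix.of fun i j : Fin k => (a i + a j) ^ ((q - 3) / 2)) ∧
      (IsSquare d ↔
        ((k : ZMod p) * ∑ r ∈ Finset.Icc 1 ((q - 1) / (2 * k)),
            (Nat.choose ((q - 3) / 2) (((2 * r - 1) * k - 1) / 2) : ZMod p)) ≠ 0 ∧
        IsSquare ((k : ZMod p) * ∑ r ∈ Finset.Icc 1 ((q - 1) / (2 * k)),
            (Nat.choose ((q - 3) / 2) (((2 * r - 1) * k - 1) / 2) : ZMod p))) := by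
  classical
  have hp : p.Prime := Fact.out
  have hppar : p % 2 = 1 := Nat.odd_iff.mp (hp.odd_of_ne_two hp2)
  obtain ⟨fexp, -, hqf⟩ := FiniteField.card F p
  rw [hq] at hqf
  have hqodd : q % 2 = 1 := Nat.odd_iff.mp (hqf ▸ (Nat.odd_iff.mpr hppar).pow)
  have hkmod : k % 2 = 1 := Nat.odd_iff.mp hkodd
  have hk0 : 0 < k := by omega
  have hqpos : 0 < q := hq ▸ Fintype.card_pos
  have hq4 : 4 ≤ q := by omega
  set n := (q - 3) / 2 with hn
  have hqn : q = 2 * n + 3 := by omega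
  have hkn : k ∣ n + 1 := by
    have h2 : q - 1 = 2 * (n + 1) := by omega
    have h3 : k ∣ 2 * (n + 1) := h2 ▸ hdvd
    exact (Nat.Coprime.dvd_of_dvd_mul_left (Nat.coprime_two_right.mpr hkodd) h3)
  obtain ⟨M, hM⟩ := hkn
  have hM1 : 1 ≤ M := by
    rcases Nat.eq_zero_or_pos M with h | h
    · rw [h, Nat.mul_zero] at hM; omega
    · exact h
  have hnmod : n % k = k - 1 := by
    have h1 : k * M = k * (M - 1) + k := by
      rw [← Nat.mul_succ]
      congr 1
      omega
    have h2 : n = k * (M - 1) + (k - 1) := by omega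
    rw [h2, Nat.mul_add_mod]
    exact Nat.mod_eq_of_lt (by omega)
  -- the fiberwise binomial sums
  set c : ℕ → ℕ := fun t => ∑ m ∈ (range (n + 1)).filter (fun m => m % k = t), n.choose m
    with hc
  have hcsym : ∀ t, t < k → c (k - 1 - t) = c t := by
    intro t ht
    refine Finset.sum_nbij' (fun m => n - m) (fun m => n - m) ?_ ?_ ?_ ?_ ?_
    · intro m hm
      simp only [Finset.mem_filter, Finset.mem_range] at hm ⊢
      have hmn : m ≤ n := by omega
      refine ⟨by omega, ?_⟩
      rw [aux_mod_sub hk0 hnmod hmn, hm.2]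
      omega
    · intro m hm
      simp only [Finset.mem_filter, Finset.mem_range] at hm ⊢
      have hmn : m ≤ n := by omega
      refine ⟨by omega, ?_⟩
      rw [aux_mod_sub hk0 hnmod hmn, hm.2]
    · intro m hm
      simp only [Finset.mem_filter, Finset.mem_range] at hm
      show n - (n - m) = m
      omega
    · intro m hm
      simp only [Finset.mem_filter, Finset.mem_range] at hm
      show n - (n - m) = m
      omega
    · intro m hm
      simp only [Finset.mem_filter, Finset.mem_range] at hm
      exact (Nat.choose_symm (by omega)).symm
  -- matrix factorization
  set D := Matrix.of (fun i j : Fin k => (a i + a j) ^ n) with hD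
  set V := Matrix.vandermonde a with hV
  set W := Matrix.of (fun j t : Fin k => a j ^ (k - 1 - (t : ℕ))) with hW
  set Cd := Matrix.diagonal (fun t : Fin k => (c (t : ℕ) : F)) with hCd
  have hfact : D = V * Cd * W.transpose := by
    rw [hD]
    ext i j
    rw [Matrix.of_apply]
    have hrhs : (V * Cd * W.transpose) i j
        = ∑ t : Fin k, (a i ^ (t : ℕ) * (c (t : ℕ) : F)) * a j ^ (k - 1 - (t : ℕ)) := by
      rw [Matrix.mul_apply]
      refine Finset.sum_congr rfl fun t _ => ?_
      rw [Matrix.mul_diagonal, Matrix.transpose_apply, hV, hW]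
      rfl
    rw [hrhs, add_pow]
    rw [← Finset.sum_fiberwise (range (n + 1))
      (fun m => (⟨m % k, Nat.mod_lt m hk0⟩ : Fin k))
      (fun m => a i ^ m * a j ^ (n - m) * (n.choose m : F))]
    refine Finset.sum_congr rfl fun t _ => ?_
    have hfib : (range (n + 1)).filter
          (fun m => (⟨m % k, Nat.mod_lt m hk0⟩ : Fin k) = t)
        = (range (n + 1)).filter (fun m => m % k = (t : ℕ)) := by
      refine Finset.filter_congr fun m _ => ?_
      simp [Fin.ext_iff]
    rw [hfib]
    have hterm : ∀ m ∈ (range (n + 1)).filter (fun m => m % k = (t : ℕ)),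
        a i ^ m * a j ^ (n - m) * (n.choose m : F)
          = (a i ^ (t : ℕ) * a j ^ (k - 1 - (t : ℕ))) * (n.choose m : F) := by
      intro m hm
      simp only [Finset.mem_filter, Finset.mem_range] at hm
      obtain ⟨hm1, hm2⟩ := hm
      rw [aux_pow_mod (hroot i) m, hm2]
      rw [aux_pow_mod (hroot j) (n - m), aux_mod_sub hk0 hnmod (by omega), hm2]
    rw [Finset.sum_congr rfl hterm, ← Finset.mul_sum]
    rw [hc]
    push_cast
    ring
  have hprodA : ∏ i, a i = 1 := aux_prod_a hkodd ha hroot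
  have heraseP := aux_erase_prod hk0 ha hroot
  have hVW := aux_detVW hkodd ha hroot hprodA heraseP
  have hdet : D.det = (k : F) ^ k * ∏ t : Fin k, (c (t : ℕ) : F) := by
    rw [hfact, Matrix.det_mul, Matrix.det_mul, Matrix.det_transpose, hCd, Matrix.det_diagonal]
    rw [mul_right_comm]
    rw [hVW]
  -- pairing in the product
  set t0 : Fin k := ⟨(k - 1) / 2, by omega⟩ with ht0
  have hrevt0 : Fin.rev t0 = t0 := by
    apply Fin.ext
    rw [Fin.val_rev]
    show k - ((k - 1) / 2 + 1) = (k - 1) / 2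
    omega
  have hcrev : ∀ t : Fin k, c ((Fin.rev t : Fin k) : ℕ) = c (t : ℕ) := by
    intro t
    have hv : ((Fin.rev t : Fin k) : ℕ) = k - 1 - (t : ℕ) := by
      rw [Fin.val_rev]
      omega
    rw [hv]
    exact hcsym _ t.isLt
  have hIoiIio : ∏ t ∈ Ioi t0, c (t : ℕ) = ∏ t ∈ Iio t0, c (t : ℕ) := by
    refine Finset.prod_nbij' Fin.rev Fin.rev ?_ ?_ ?_ ?_ ?_
    · intro t ht
      rw [Finset.mem_Ioi] at ht
      rw [Finset.mem_Iio, ← hrevt0]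
      exact Fin.rev_lt_rev.mpr ht
    · intro t ht
      rw [Finset.mem_Iio] at ht
      rw [Finset.mem_Ioi, ← hrevt0]
      exact Fin.rev_lt_rev.mpr ht
    · intro t _; exact Fin.rev_rev t
    · intro t _; exact Fin.rev_rev t
    · intro t _; exact (hcrev t).symm
  have hsplit : (∏ t : Fin k, c (t : ℕ)) = c ((k - 1) / 2) * (∏ t ∈ Iio t0, c (t : ℕ)) ^ 2 := by
    rw [← Finset.prod_filter_mul_prod_filter_not univ (· < t0) (fun t : Fin k => c (t : ℕ))]
    have h1 : univ.filter (· < t0) = Iio t0 := by ext x; simp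
    have h2 : univ.filter (fun x => ¬ x < t0) = Ici t0 := by ext x; simp [not_lt]
    rw [h1, h2, ← Finset.Ioi_insert, Finset.prod_insert (by simp), hIoiIio]
    have : c ((t0 : ℕ)) = c ((k - 1) / 2) := rfl
    rw [this]
    ring
  -- rewriting the statement sum
  have hqM : (q - 1) / (2 * k) = M := by
    have h2 : q - 1 = 2 * k * M := by
      rw [mul_assoc]
      omega
    rw [h2, Nat.mul_div_cancel_left _ (by omega : 0 < 2 * k)]
  have hsum : ∑ r ∈ Icc 1 M, n.choose (((2 * r - 1) * k - 1) / 2) = c ((k - 1) / 2) := by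
    refine Finset.sum_nbij' (fun r => ((2 * r - 1) * k - 1) / 2) (fun m => m / k + 1)
      ?_ ?_ ?_ ?_ ?_
    · intro r hr
      rw [Finset.mem_Icc] at hr
      obtain ⟨r', rfl⟩ : ∃ r', r = r' + 1 := ⟨r - 1, by omega⟩
      have h21 : 2 * (r' + 1) - 1 = 2 * r' + 1 := by omega
      have hPQ : (2 * (r' + 1) - 1) * k = 2 * (k * r') + k := by
        rw [h21]; ring
      have hφ : ((2 * (r' + 1) - 1) * k - 1) / 2 = k * r' + (k - 1) / 2 := by
        rw [hPQ]; omega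
      have hms : k * (r' + 1) ≤ k * M := Nat.mul_le_mul_left k hr.2
      have hsucc : k * (r' + 1) = k * r' + k := Nat.mul_succ k r'
      simp only [Finset.mem_filter, Finset.mem_range]
      rw [hφ]
      constructor
      · omega
      · rw [Nat.mul_add_mod]
        exact Nat.mod_eq_of_lt (by omega)
    · intro m hm
      simp only [Finset.mem_filter, Finset.mem_range] at hm
      simp only [Finset.mem_Icc]
      have : m / k < M := by
        rw [Nat.div_lt_iff_lt_mul hk0, mul_comm]
        omega
      exact ⟨Nat.le_add_left 1 _, Nat.succ_le_of_lt this⟩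
    · intro r hr
      rw [Finset.mem_Icc] at hr
      obtain ⟨r', rfl⟩ : ∃ r', r = r' + 1 := ⟨r - 1, by omega⟩
      have h21 : 2 * (r' + 1) - 1 = 2 * r' + 1 := by omega
      have hPQ : (2 * (r' + 1) - 1) * k = 2 * (k * r') + k := by
        rw [h21]; ring
      have hφ : ((2 * (r' + 1) - 1) * k - 1) / 2 = k * r' + (k - 1) / 2 := by
        rw [hPQ]; omega
      show ((2 * (r' + 1) - 1) * k - 1) / 2 / k + 1 = r' + 1
      rw [hφ, Nat.mul_add_div hk0, Nat.div_eq_of_lt (by omega : (k - 1) / 2 < k)]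
    · intro m hm
      simp only [Finset.mem_filter, Finset.mem_range] at hm
      have hdm := Nat.div_add_mod m k
      have h21 : 2 * (m / k + 1) - 1 = 2 * (m / k) + 1 := by omega
      have hx : (2 * (m / k) + 1) * k = 2 * (k * (m / k)) + k := by ring
      show ((2 * (m / k + 1) - 1) * k - 1) / 2 = m
      rw [h21, hx]
      omega
    · intro r _
      rfl
  -- assemble
  refine ⟨((k ^ k * ∏ t : Fin k, c (t : ℕ) : ℕ) : ZMod p), ?_, ?_⟩
  · rw [map_natCast, hdet]
    push_cast
    ring
  · set S : ZMod p := (k : ZMod p) * ∑ r ∈ Finset.Icc 1 ((q - 1) / (2 * k)),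
      (n.choose (((2 * r - 1) * k - 1) / 2) : ZMod p) with hS
    have hSval : S = ((k * c ((k - 1) / 2) : ℕ) : ZMod p) := by
      rw [hS, hqM, ← Nat.cast_sum, hsum]
      push_cast
      ring
    have hkk : k ^ k = k * (k ^ ((k - 1) / 2)) ^ 2 := by
      rw [← pow_mul, ← pow_succ']
      congr 1
      omega
    have hdnat : k ^ k * ∏ t : Fin k, c (t : ℕ)
        = (k * c ((k - 1) / 2)) * ((k ^ ((k - 1) / 2)) * ∏ t ∈ Iio t0, c (t : ℕ)) ^ 2 := by
      rw [hsplit, hkk]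
      ring
    set e : ZMod p := ((k ^ ((k - 1) / 2) * ∏ t ∈ Iio t0, c (t : ℕ) : ℕ) : ZMod p) with he
    have hdSe : ((k ^ k * ∏ t : Fin k, c (t : ℕ) : ℕ) : ZMod p) = S * e ^ 2 := by
      rw [hSval, he, hdnat]
      push_cast
      ring
    have hd0 : ((k ^ k * ∏ t : Fin k, c (t : ℕ) : ℕ) : ZMod p) ≠ 0 := by
      intro h0
      apply hns
      have h1 := congrArg (ZMod.castHom (dvd_refl p) F) h0
      rw [map_natCast, map_zero] at h1
      calc D.det = ((k ^ k * ∏ t : Fin k, c (t : ℕ) : ℕ) : F) := by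
            rw [hdet]; push_cast; ring
        _ = 0 := h1
    constructor
    · rintro ⟨y, hy⟩
      have hS0 : S ≠ 0 := fun h => hd0 (by rw [hdSe, h, zero_mul])
      have he0 : e ≠ 0 := fun h => hd0 (by rw [hdSe, h]; ring)
      refine ⟨hS0, ⟨y * e⁻¹, ?_⟩⟩
      have h2 : S * e ^ 2 = y * y := by rw [← hdSe, hy]
      field_simp
      linear_combination h2
    · rintro ⟨hS0, y, hy⟩
      exact ⟨y * e, by rw [hdSe, hy]; ring⟩
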